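/- For every integer g ≥ 1, ∑_{d=⌈(g+1)/2⌉}^{g+1} ((2d-g-1)^2/(g+1)^2)·C(g+1,d)^2 = (1/(g+1))·C(2g,g). -/

import Mathlib

open Finset

-- V1: sum of squares of binomials
lemma V1 (m : ℕ) : ∑ i ∈ range (m+1), (m.choose i)^2 = (2*m).choose m := by
  rw [two_mul, Nat.add_choose_eq,
    Nat.sum_antidiagonal_eq_sum_range_succ (fun i j => m.choose i * m.choose j) m]
  refine Finset.sum_congr rfl fun i hi => ?_
  rw [sq, Nat.choose_symm (by simpa using Nat.lt_succ_iff.mp (mem_range.mp hi))]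

-- V2: ∑ C(m,i) C(m+1,i+1) = C(2m+1, m)
lemma V2 (m : ℕ) : ∑ i ∈ range (m+1), m.choose i * (m+1).choose (i+1) = (2*m+1).choose m := by
  have : 2*m+1 = m + (m+1) := by ring
  rw [this, Nat.add_choose_eq,
    Nat.sum_antidiagonal_eq_sum_range_succ (fun i j => m.choose i * (m+1).choose j) m]
  refine Finset.sum_congr rfl fun i hi => ?_
  congr 1
  have hi' : i ≤ m := Nat.lt_succ_iff.mp (mem_range.mp hi)
  rw [← Nat.choose_symm (by omega : i+1 ≤ m+1)]
  congr 1
  omega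

lemma keyQ (m d : ℕ) : ((d:ℚ)+1) * ((m+1).choose (d+1)) = ((m:ℚ)+1) * (m.choose d) := by
  have h : (m+1) * m.choose d = (m+1).choose (d+1) * (d+1) := Nat.add_one_mul_choose_eq m d
  have h2 : ((m:ℚ)+1) * (m.choose d : ℚ) = ((m+1).choose (d+1) : ℚ) * ((d:ℚ)+1) := by
    exact_mod_cast h
  linarith

lemma S1 (m : ℕ) : ∑ d ∈ range (m+2), (d:ℚ) * (((m+1).choose d : ℚ))^2
    = ((m:ℚ)+1) * ((2*m+1).choose m : ℚ) := by
  rw [Finset.sum_range_succ']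
  push_cast
  norm_num
  have h : ∀ e ∈ range (m+1), ((e:ℚ)+1) * (((m+1).choose (e+1) : ℚ))^2
      = ((m:ℚ)+1) * ((m.choose e : ℚ) * ((m+1).choose (e+1) : ℚ)) := by
    intro e he
    have := keyQ m e
    linear_combination (((m+1).choose (e+1) : ℚ)) * this
  calc ∑ e ∈ range (m+1), ((e:ℚ)+1) * (((m+1).choose (e+1) : ℚ))^2
      = ∑ e ∈ range (m+1), ((m:ℚ)+1) * ((m.choose e : ℚ) * ((m+1).choose (e+1) : ℚ)) :=
        Finset.sum_congr rfl h
    _ = ((m:ℚ)+1) * ∑ e ∈ range (m+1), ((m.choose e * (m+1).choose (e+1) : ℕ) : ℚ) := by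
        rw [← Finset.mul_sum]; push_cast; ring
    _ = ((m:ℚ)+1) * ((2*m+1).choose m : ℚ) := by
        rw [← Nat.cast_sum, V2 m]

lemma S2 (m : ℕ) : ∑ d ∈ range (m+2), (d:ℚ)^2 * (((m+1).choose d : ℚ))^2
    = ((m:ℚ)+1)^2 * ((2*m).choose m : ℚ) := by
  rw [Finset.sum_range_succ']
  push_cast
  norm_num
  have h : ∀ e ∈ range (m+1), ((e:ℚ)+1)^2 * (((m+1).choose (e+1) : ℚ))^2
      = ((m:ℚ)+1)^2 * ((m.choose e : ℚ))^2 := by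
    intro e he
    have := keyQ m e
    linear_combination (((e:ℚ)+1) * (((m+1).choose (e+1)) : ℚ) + ((m:ℚ)+1) * ((m.choose e : ℚ))) * this
  calc ∑ e ∈ range (m+1), ((e:ℚ)+1)^2 * (((m+1).choose (e+1) : ℚ))^2
      = ∑ e ∈ range (m+1), ((m:ℚ)+1)^2 * ((m.choose e : ℚ))^2 := Finset.sum_congr rfl h
    _ = ((m:ℚ)+1)^2 * ∑ e ∈ range (m+1), (((m.choose e)^2 : ℕ) : ℚ) := by
        rw [← Finset.mul_sum]; push_cast; ring
    _ = _ := by rw [← Nat.cast_sum, V1 m]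

lemma Ffull (g : ℕ) :
    ∑ d ∈ range (g+2), (2*(d:ℚ) - (g:ℚ) - 1)^2 * (((g+1).choose d : ℚ))^2
      = 2*((g:ℚ)+1) * ((2*g).choose g : ℚ) := by
  have hV : ∑ d ∈ range (g+2), (((g+1).choose d : ℚ))^2 = ((2*(g+1)).choose (g+1) : ℚ) := by
    have := congrArg (Nat.cast : ℕ → ℚ) (V1 (g+1))
    push_cast at this
    convert this using 2
  have expand : ∀ d ∈ range (g+2), (2*(d:ℚ) - (g:ℚ) - 1)^2 * (((g+1).choose d : ℚ))^2
      = 4*((d:ℚ)^2 * (((g+1).choose d : ℚ))^2)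
        - 4*((g:ℚ)+1)*((d:ℚ) * (((g+1).choose d : ℚ))^2)
        + ((g:ℚ)+1)^2 * (((g+1).choose d : ℚ))^2 := fun d _ => by ring
  rw [Finset.sum_congr rfl expand]
  rw [Finset.sum_add_distrib, Finset.sum_sub_distrib, ← Finset.mul_sum, ← Finset.mul_sum,
    ← Finset.mul_sum, S1 g, S2 g, hV]
  have h1 : (2*(g:ℚ)+1) * ((2*g).choose g : ℚ) = ((g:ℚ)+1) * ((2*g+1).choose g : ℚ) := by
    have hn : (2*g+1) * (2*g).choose g = (2*g+1).choose (g+1) * (g+1) :=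
      Nat.add_one_mul_choose_eq (2*g) g
    have hs : (2*g+1).choose (g+1) = (2*g+1).choose g := by
      have := Nat.choose_symm (by omega : g ≤ 2*g+1)
      simpa [show 2*g+1-g = g+1 by omega] using this
    rw [hs] at hn
    have hq := congrArg (Nat.cast (R := ℚ)) hn
    push_cast at hq
    linear_combination hq
  have h2 : (2*(g:ℚ)+2) * ((2*g+1).choose g : ℚ) = ((g:ℚ)+1) * ((2*(g+1)).choose (g+1) : ℚ) := by
    have hn : (2*g+2) * (2*g+1).choose g = (2*g+2).choose (g+1) * (g+1) :=
      Nat.add_one_mul_choose_eq (2*g+1) g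
    have : ((2*g+2) * (2*g+1).choose g : ℕ) = ((2*(g+1)).choose (g+1) * (g+1) : ℕ) := by
      rw [show 2*(g+1) = 2*g+2 from by omega]; exact hn
    have hq := congrArg (Nat.cast (R := ℚ)) this
    push_cast at hq
    linear_combination hq
  linear_combination 2*((g:ℚ)+1)*h1 - ((g:ℚ)+1)*h2

lemma half (g : ℕ) (hg : 1 ≤ g) :
    2 * ∑ d ∈ Icc ((g+2)/2) (g+1), (2*(d:ℚ)-(g:ℚ)-1)^2 * (((g+1).choose d : ℚ))^2
      = ∑ d ∈ range (g+2), (2*(d:ℚ)-(g:ℚ)-1)^2 * (((g+1).choose d : ℚ))^2 := by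
  set f : ℕ → ℚ := fun d => (2*(d:ℚ)-(g:ℚ)-1)^2 * (((g+1).choose d : ℚ))^2 with hf
  have hsym : ∀ d ≤ g+1, f d = f (g+1-d) := by
    intro d hd
    simp only [hf]
    rw [Nat.choose_symm hd]
    congr 1
    have hc : ((g+1-d : ℕ) : ℚ) = (g:ℚ)+1-(d:ℚ) := by
      have : (d:ℚ) ≤ (g:ℚ)+1 := by exact_mod_cast hd
      push_cast [Nat.cast_sub hd]; ring
    rw [hc]; ring
  set s := (g+2)/2 with hs
  have hsplit : ∑ d ∈ Ico 0 s, f d + ∑ d ∈ Ico s (g+2), f d = ∑ d ∈ Ico 0 (g+2), f d :=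
    Finset.sum_Ico_consecutive f (by omega) (by omega)
  have hIcc : Icc s (g+1) = Ico s (g+2) := (Finset.Ico_add_one_right_eq_Icc s (g+1)).symm
  have hlow : ∑ d ∈ Ico 0 s, f d = ∑ e ∈ Ico (g+2-s) (g+2), f e := by
    refine Finset.sum_nbij' (fun d => g+1-d) (fun e => g+1-e) ?_ ?_ ?_ ?_ ?_
    · intro a ha; simp only [Finset.mem_Ico] at *; omega
    · intro a ha; simp only [Finset.mem_Ico] at *; omega
    · intro a ha; simp only [Finset.mem_Ico] at ha; show g+1-(g+1-a) = a; omega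
    · intro a ha; simp only [Finset.mem_Ico] at ha; show g+1-(g+1-a) = a; omega
    · intro a ha; simp only [Finset.mem_Ico] at ha; exact hsym a (by omega)
  have hup : ∑ e ∈ Ico (g+2-s) (g+2), f e = ∑ d ∈ Ico s (g+2), f d := by
    rcases Nat.even_or_odd g with he | ho
    · -- g even : g+2-s = s
      obtain ⟨k, hk⟩ := he
      have h1 : g+2-s = s := by omega
      rw [h1]
    · -- g odd : g+2-s = s+1, and f s = 0
      obtain ⟨k, hk⟩ := ho
      have h1 : g+2-s = s+1 := by omega
      have h2 : 2*s = g+1 := by omega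
      have hz : f s = 0 := by
        simp only [hf]
        have hc : 2*(s:ℚ) - (g:ℚ) - 1 = 0 := by
          have : ((2*s : ℕ) : ℚ) = ((g+1 : ℕ) : ℚ) := by rw [h2]
          push_cast at this; linarith
        rw [hc]; ring
      rw [h1, Finset.sum_eq_sum_Ico_succ_bot (by omega : s < g+2) f, hz, zero_add]
  rw [hIcc, ← Finset.range_eq_Ico] at *
  rw [hlow, hup] at hsplit
  rw [← Finset.range_eq_Ico] at hsplit
  linarith [hsplit]


/-- ∑_{d=⌈(g+1)/2⌉}^{g+1} ((2d-g-1)²/(g+1)²)·C(g+1,d)² = (1/(g+1))·C(2g,g);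
note ⌈(g+1)/2⌉ = (g+2)/2 in natural-number division. -/
theorem limit_linear_series_count (g : ℕ) (hg : 1 ≤ g) :
    (∑ d ∈ Finset.Icc ((g + 2) / 2) (g + 1),
        ((2 * (d : ℚ) - (g : ℚ) - 1) ^ 2 / ((g : ℚ) + 1) ^ 2) *
          (((g + 1).choose d : ℚ)) ^ 2) =
      (1 / ((g : ℚ) + 1)) * (((2 * g).choose g : ℚ)) := by
  have hne : ((g:ℚ)+1) ≠ 0 := by positivity
  have hH := half g hg
  rw [Ffull g] at hH
  have hsum : ∑ d ∈ Finset.Icc ((g+2)/2) (g+1),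
      (2*(d:ℚ)-(g:ℚ)-1)^2 * (((g+1).choose d : ℚ))^2
      = ((g:ℚ)+1) * ((2*g).choose g : ℚ) := by linarith
  calc (∑ d ∈ Finset.Icc ((g + 2) / 2) (g + 1),
        ((2 * (d : ℚ) - (g : ℚ) - 1) ^ 2 / ((g : ℚ) + 1) ^ 2) *
          (((g + 1).choose d : ℚ)) ^ 2)
      = ∑ d ∈ Finset.Icc ((g + 2) / 2) (g + 1),
          (1/((g:ℚ)+1)^2) * ((2*(d:ℚ)-(g:ℚ)-1)^2 * (((g+1).choose d : ℚ))^2) :=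
        Finset.sum_congr rfl fun d _ => by ring
    _ = (1/((g:ℚ)+1)^2) * ∑ d ∈ Finset.Icc ((g+2)/2) (g+1),
          (2*(d:ℚ)-(g:ℚ)-1)^2 * (((g+1).choose d : ℚ))^2 := by rw [← Finset.mul_sum]
    _ = (1/((g:ℚ)+1)^2) * (((g:ℚ)+1) * ((2*g).choose g : ℚ)) := by rw [hsum]
    _ = (1 / ((g : ℚ) + 1)) * (((2 * g).choose g : ℚ)) := by field_simp
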